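/- Restrict the Chisini construction to a line through p = (0:0:1): let c(u,v,w) = aw³ + b(u,v)w² + c₁(u,v)w + d(u,v) be viewed as a cubic in w with coefficients depending on a point of the line, and let q(w) = c''(w)·c(w) − (1/2)(c'(w))² be the associated quartic in w (derivatives in w). Writing q(w) = q₀w⁴ + q₁w³ + q₂w² + q₃w + q₄ explicitly in terms of a, b, c₁, d, the invariant I = 12q₀q₄ − 3q₁q₃ + q₂² vanishes identically. Concretely: for the cubic c(w) = aw³ + bw² + cw + d over any commutative ring containing 1/2, the quartic q(w) = (6aw + 2b)(aw³ + bw² + cw + d) − (1/2)(3aw² + 2bw + c)² has vanishing invariant 12q₀q₄ − 3q₁q₃ + q₂² = 0. -/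
import Mathlib


open Polynomial in
/-- for a cubic c(w) = aw³+bw²+cw+d over a commutative ring with 1/2,
the quartic q = c''·c − (1/2)(c')² has vanishing invariant 12q₀q₄ − 3q₁q₃ + q₂²,
where qᵢ is the coefficient of w^(4−i) in q. -/
theorem stmt9 (R : Type*) [CommRing R] [Invertible (2 : R)] (a b c d : R) :
    let q : Polynomial R :=
      (Polynomial.C (6 * a) * X + Polynomial.C (2 * b)) *
          (Polynomial.C a * X ^ 3 + Polynomial.C b * X ^ 2 + Polynomial.C c * X
            + Polynomial.C d)
        - Polynomial.C (⅟(2 : R)) *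
          (Polynomial.C (3 * a) * X ^ 2 + Polynomial.C (2 * b) * X + Polynomial.C c) ^ 2
    12 * q.coeff 4 * q.coeff 0 - 3 * q.coeff 3 * q.coeff 1 + (q.coeff 2) ^ 2 = 0 := by

  intro q
  have h2 : (2 : R) * ⅟(2:R) = 1 := mul_invOf_self 2
  have hq : q = Polynomial.C (6*a^2 - ⅟(2:R)*(9*a^2)) * X^4
      + Polynomial.C (8*a*b - ⅟(2:R)*(12*a*b)) * X^3
      + Polynomial.C (6*a*c + 2*b^2 - ⅟(2:R)*(6*a*c + 4*b^2)) * X^2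
      + Polynomial.C (6*a*d + 2*b*c - ⅟(2:R)*(4*b*c)) * X
      + Polynomial.C (2*b*d - ⅟(2:R)*(c^2)) := by
    simp only [q, map_sub, map_add, map_mul, map_pow, map_ofNat]
    ring_nf
  rw [hq]
  simp only [coeff_add, coeff_C_mul, coeff_X_pow, coeff_C, coeff_X, mul_ite, mul_one,
    mul_zero]
  norm_num
  linear_combination ((72*a^2*c^2 - 48*a*b^2*c + 8*b^4)*⅟(2:R)
    - 36*a^2*c^2 + 24*a*b^2*c - 4*b^4) * h2
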